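/- det(M^s) = M_{11} · M_{22} · ... · M_{nn}, i.e., the determinant of the sequential matrix of M equals the product of the diagonal entries of M. -/
import Mathlib


/-- The sequential mapping `M^↓`: for `i = 0,...,n-1` in order, perform the
in-place assignment `x_i := ∑ j, M i j * x j` on the (partially updated) vector. -/
def seqMap {K : Type*} [Field K] {n : ℕ} (M : Matrix (Fin n) (Fin n) K)
    (x : Fin n → K) : Fin n → K :=
  Fin.foldl n (fun v i => Function.update v i (∑ j, M i j * v j)) x

/-- The matrix `M^s` of the sequential mapping of `M`. -/
def seqMat {K : Type*} [Field K] {n : ℕ} (M : Matrix (Fin n) (Fin n) K) :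
    Matrix (Fin n) (Fin n) K :=
  fun i j => seqMap M (Pi.single j 1) i

/-- `F_i`: the identity matrix with `i`-th row replaced by the `i`-th row of `M`. -/
def Fmat {K : Type*} [Field K] {n : ℕ} (M : Matrix (Fin n) (Fin n) K) (i : Fin n) :
    Matrix (Fin n) (Fin n) K :=
  (1 : Matrix (Fin n) (Fin n) K).updateRow i (M i)

open Matrix

/-- One sequential update step is multiplication by `F_i`. -/
lemma step_eq {K : Type*} [Field K] {n : ℕ} (M : Matrix (Fin n) (Fin n) K)
    (i : Fin n) (v : Fin n → K) :
    Function.update v i (∑ j, M i j * v j) = Fmat M i *ᵥ v := by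
  funext k
  rcases eq_or_ne k i with rfl | h
  · simp [Fmat, Matrix.mulVec, dotProduct]
  · simp [Function.update_of_ne h, Fmat, Matrix.mulVec, dotProduct,
      Matrix.updateRow_ne h, Matrix.one_apply, Finset.sum_ite_eq]

/-- Folding multiplications by matrices yields multiplication by the reversed product. -/
lemma foldl_mulVec {K : Type*} [Field K] {m : Type*} [Fintype m] [DecidableEq m] :
    ∀ {n : ℕ} (A : Fin n → Matrix m m K) (x : m → K),
    Fin.foldl n (fun v i => A i *ᵥ v) x = (List.ofFn A).reverse.prod *ᵥ x := by
  intro n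
  induction n with
  | zero => intro A x; simp [Fin.foldl_zero]
  | succ k ih =>
    intro A x
    rw [Fin.foldl_succ, ih (fun i => A i.succ), List.ofFn_succ, List.reverse_cons,
      List.prod_append, List.prod_singleton, ← Matrix.mulVec_mulVec]

lemma det_Fmat {K : Type*} [Field K] {n : ℕ} (M : Matrix (Fin n) (Fin n) K) (i : Fin n) :
    (Fmat M i).det = M i i := by
  have h : M i = ∑ j, M i j • (1 : Matrix (Fin n) (Fin n) K) j := by
    funext k; simp [Matrix.one_apply, Finset.sum_ite_eq']
  rw [Fmat]
  conv_lhs => rw [h]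
  rw [Matrix.det_updateRow_sum, Matrix.det_one, smul_eq_mul, mul_one]

lemma seqMat_eq {K : Type*} [Field K] {n : ℕ} (M : Matrix (Fin n) (Fin n) K) :
    seqMat M = (List.ofFn (Fmat M)).reverse.prod := by
  funext i j
  have : seqMap M (Pi.single j 1)
      = (List.ofFn (Fmat M)).reverse.prod *ᵥ Pi.single j 1 := by
    rw [seqMap]
    simp only [step_eq]
    exact foldl_mulVec (Fmat M) _
  simp [seqMat, this, Matrix.mulVec_single]

/-- `det (M^s)` equals the product of the diagonal entries of `M`. -/
theorem stmt6 {K : Type*} [Field K] {n : ℕ} (M : Matrix (Fin n) (Fin n) K) :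
    (seqMat M).det = ∏ i, M i i := by
  have hd : ((List.ofFn (Fmat M)).reverse.prod).det
      = ((List.ofFn (Fmat M)).reverse.map Matrix.det).prod := by
    simpa using MonoidHom.map_list_prod Matrix.detMonoidHom ((List.ofFn (Fmat M)).reverse)
  rw [seqMat_eq, hd, List.map_reverse, List.prod_reverse]
  simp [det_Fmat, List.prod_ofFn]
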